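/- arXiv:2010.11637 — 3 statements merged into one kernel-verified Lean document; each statement's English description precedes it below -/
import Mathlib

section
/- Assume Q_f = P and that the symmetric matrix P⁻¹ − F P⁻¹ Fᵀ − H is positive definite with smallest eigenvalue λ_min. Let k ≥ 0 and define the MPC control in closed loop using k exact predictions and no delay: u_t = −(R + BᵀPB)⁻¹ Bᵀ (P A x_t + Σ_{i=0}^{min(k, T−t)−1} (Fᵀ)^i P w_{t+i}), where x is the trajectory generated by u from x_0. Let ALG = J(u) and OPT = inf_{v ∈ (ℝ^m)^T} J(v). Then ALG ≤ [ 1 + ‖F^k‖² ‖H‖ / λ_min ] · OPT. -/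
open Matrix

noncomputable def evNorm {n : ℕ} (x : Fin n → ℝ) : ℝ := Real.sqrt (∑ i, x i ^ 2)

noncomputable def specNorm {n m : ℕ} (M : Matrix (Fin n) (Fin m) ℝ) : ℝ :=
  sSup {c : ℝ | ∃ x : Fin m → ℝ, evNorm x ≤ 1 ∧ c = evNorm (M *ᵥ x)}

noncomputable def lambdaMin {n : ℕ} (M : Matrix (Fin n) (Fin n) ℝ) : ℝ :=
  sInf {c : ℝ | ∃ x : Fin n → ℝ, evNorm x = 1 ∧ c = x ⬝ᵥ (M *ᵥ x)}

noncomputable def specRad {n : ℕ} (M : Matrix (Fin n) (Fin n) ℝ) : ENNReal :=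
  spectralRadius ℂ (M.map Complex.ofReal)

noncomputable def seqState {n m : ℕ} (A : Matrix (Fin n) (Fin n) ℝ)
    (B : Matrix (Fin n) (Fin m) ℝ) (x0 : Fin n → ℝ)
    (u : ℕ → Fin m → ℝ) (w : ℕ → Fin n → ℝ) : ℕ → Fin n → ℝ
  | 0 => x0
  | t + 1 => A *ᵥ seqState A B x0 u w t + B *ᵥ u t + w t

noncomputable def trajCost {n m : ℕ} (A : Matrix (Fin n) (Fin n) ℝ)
    (B : Matrix (Fin n) (Fin m) ℝ) (Q : Matrix (Fin n) (Fin n) ℝ)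
    (R : Matrix (Fin m) (Fin m) ℝ) (Qf : Matrix (Fin n) (Fin n) ℝ)
    (x0 : Fin n → ℝ) (w : ℕ → Fin n → ℝ) (T : ℕ) (u : ℕ → Fin m → ℝ) : ℝ :=
  (∑ t ∈ Finset.range T,
      (seqState A B x0 u w t ⬝ᵥ (Q *ᵥ seqState A B x0 u w t) + u t ⬝ᵥ (R *ᵥ u t)))
    + seqState A B x0 u w T ⬝ᵥ (Qf *ᵥ seqState A B x0 u w T)

noncomputable def mpcCost {n m : ℕ} (A : Matrix (Fin n) (Fin n) ℝ)
    (B : Matrix (Fin n) (Fin m) ℝ) (Q : Matrix (Fin n) (Fin n) ℝ)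
    (R : Matrix (Fin m) (Fin m) ℝ) (P : Matrix (Fin n) (Fin n) ℝ)
    (z : Fin n → ℝ) (what : ℕ → Fin n → ℝ) (k : ℕ) (u : Fin k → Fin m → ℝ) : ℝ :=
  trajCost A B Q R P z what k (fun t => if h : t < k then u ⟨t, h⟩ else 0)

namespace Aux14


lemma evNorm_nonneg {n : ℕ} (x : Fin n → ℝ) : 0 ≤ evNorm x := Real.sqrt_nonneg _

lemma evNorm_sq {n : ℕ} (x : Fin n → ℝ) : evNorm x ^ 2 = ∑ i, x i ^ 2 :=
  Real.sq_sqrt (Finset.sum_nonneg fun i _ => sq_nonneg _)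

lemma evNorm_zero {n : ℕ} : evNorm (0 : Fin n → ℝ) = 0 := by simp [evNorm]

lemma dot_self_eq {n : ℕ} (x : Fin n → ℝ) : x ⬝ᵥ x = evNorm x ^ 2 := by
  rw [evNorm_sq]; simp [dotProduct, sq]

lemma dot_le_evNorm {n : ℕ} (x y : Fin n → ℝ) : x ⬝ᵥ y ≤ evNorm x * evNorm y :=
  Real.sum_mul_le_sqrt_mul_sqrt _ _ _

lemma evNorm_pos {n : ℕ} {x : Fin n → ℝ} (hx : x ≠ 0) : 0 < evNorm x := by
  rcases Function.ne_iff.1 hx with ⟨i, hi⟩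
  apply Real.sqrt_pos.2
  apply Finset.sum_pos' (fun j _ => sq_nonneg _)
  exact ⟨i, Finset.mem_univ i, by simpa using pow_pos (abs_pos.2 hi) 2 |>.trans_le (by rw [sq_abs])⟩

lemma evNorm_smul {n : ℕ} (c : ℝ) (x : Fin n → ℝ) : evNorm (c • x) = |c| * evNorm x := by
  unfold evNorm
  rw [← Real.sqrt_sq_eq_abs, ← Real.sqrt_mul (sq_nonneg _), Finset.mul_sum]
  congr 1
  exact Finset.sum_congr rfl fun i _ => by simp [mul_pow]

lemma dot_symm {n m : ℕ} (M : Matrix (Fin n) (Fin m) ℝ) (x : Fin n → ℝ) (y : Fin m → ℝ) :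
    x ⬝ᵥ (M *ᵥ y) = y ⬝ᵥ (Mᵀ *ᵥ x) := by
  simp only [dotProduct, Matrix.mulVec, Matrix.transpose_apply, Finset.mul_sum]
  rw [Finset.sum_comm]
  exact Finset.sum_congr rfl fun i _ => Finset.sum_congr rfl fun j _ => by ring

noncomputable def frob {n m : ℕ} (M : Matrix (Fin n) (Fin m) ℝ) : ℝ :=
  Real.sqrt (∑ i, ∑ j, M i j ^ 2)

lemma evNorm_mulVec_le_frob {n m : ℕ} (M : Matrix (Fin n) (Fin m) ℝ) (x : Fin m → ℝ) :
    evNorm (M *ᵥ x) ≤ frob M * evNorm x := by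
  have h1 : evNorm (M *ᵥ x) ^ 2 ≤ (frob M * evNorm x) ^ 2 := by
    rw [evNorm_sq, mul_pow, frob, Real.sq_sqrt (by positivity), evNorm_sq, Finset.sum_mul]
    apply Finset.sum_le_sum
    intro i _
    simpa [Matrix.mulVec, dotProduct] using
      Finset.sum_mul_sq_le_sq_mul_sq Finset.univ (fun j => M i j) x
  exact (pow_le_pow_iff_left₀ (evNorm_nonneg _) (mul_nonneg (Real.sqrt_nonneg _) (evNorm_nonneg _)) two_ne_zero).1 h1

section SpecNorm
variable {n m : ℕ}

lemma specSet_nonempty (M : Matrix (Fin n) (Fin m) ℝ) :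
    {c : ℝ | ∃ x : Fin m → ℝ, evNorm x ≤ 1 ∧ c = evNorm (M *ᵥ x)}.Nonempty :=
  ⟨evNorm (M *ᵥ 0), 0, by simp [evNorm_zero]⟩

lemma specSet_bddAbove (M : Matrix (Fin n) (Fin m) ℝ) :
    BddAbove {c : ℝ | ∃ x : Fin m → ℝ, evNorm x ≤ 1 ∧ c = evNorm (M *ᵥ x)} := by
  refine ⟨frob M, ?_⟩
  rintro c ⟨x, hx, rfl⟩
  calc evNorm (M *ᵥ x) ≤ frob M * evNorm x := evNorm_mulVec_le_frob M x
    _ ≤ frob M * 1 := by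
        exact mul_le_mul_of_nonneg_left hx (Real.sqrt_nonneg _)
    _ = frob M := mul_one _

lemma specNorm_nonneg (M : Matrix (Fin n) (Fin m) ℝ) : 0 ≤ specNorm M := by
  have := le_csSup (specSet_bddAbove M) (show evNorm (M *ᵥ 0) ∈ _ from ⟨0, by simp [evNorm_zero], rfl⟩)
  rw [Matrix.mulVec_zero, evNorm_zero] at this; exact this

lemma evNorm_mulVec_le (M : Matrix (Fin n) (Fin m) ℝ) (x : Fin m → ℝ) :
    evNorm (M *ᵥ x) ≤ specNorm M * evNorm x := by
  rcases eq_or_ne x 0 with rfl | hx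
  · simp [evNorm_zero]
  · have hpos := evNorm_pos hx
    have hmem : evNorm (M *ᵥ ((evNorm x)⁻¹ • x)) ∈
        {c : ℝ | ∃ y : Fin m → ℝ, evNorm y ≤ 1 ∧ c = evNorm (M *ᵥ y)} := by
      refine ⟨(evNorm x)⁻¹ • x, ?_, rfl⟩
      rw [evNorm_smul, abs_of_nonneg (inv_nonneg.2 hpos.le), inv_mul_cancel₀ hpos.ne']
    have hle := le_csSup (specSet_bddAbove M) hmem
    have heq : evNorm (M *ᵥ ((evNorm x)⁻¹ • x)) = (evNorm x)⁻¹ * evNorm (M *ᵥ x) := by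
      rw [Matrix.mulVec_smul, evNorm_smul, abs_of_nonneg (inv_nonneg.2 hpos.le)]
    rw [heq] at hle
    calc evNorm (M *ᵥ x) = evNorm x * ((evNorm x)⁻¹ * evNorm (M *ᵥ x)) := by
          field_simp
      _ ≤ evNorm x * specNorm M := mul_le_mul_of_nonneg_left hle hpos.le
      _ = specNorm M * evNorm x := mul_comm _ _

lemma specNorm_transpose_le (M : Matrix (Fin n) (Fin m) ℝ) :
    specNorm Mᵀ ≤ specNorm M := by
  apply csSup_le (specSet_nonempty _)
  rintro c ⟨x, hx, rfl⟩
  rcases eq_or_ne (Mᵀ *ᵥ x) 0 with h0 | h0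
  · rw [h0, evNorm_zero]; exact specNorm_nonneg M
  · have hpos := evNorm_pos h0
    have key : evNorm (Mᵀ *ᵥ x) ^ 2 ≤ specNorm M * evNorm (Mᵀ *ᵥ x) := by
      rw [← dot_self_eq]
      calc (Mᵀ *ᵥ x) ⬝ᵥ (Mᵀ *ᵥ x) = x ⬝ᵥ (M *ᵥ (Mᵀ *ᵥ x)) := (dot_symm M x _).symm
        _ ≤ evNorm x * evNorm (M *ᵥ (Mᵀ *ᵥ x)) := dot_le_evNorm _ _
        _ ≤ 1 * evNorm (M *ᵥ (Mᵀ *ᵥ x)) := by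
            exact mul_le_mul_of_nonneg_right hx (evNorm_nonneg _)
        _ = evNorm (M *ᵥ (Mᵀ *ᵥ x)) := one_mul _
        _ ≤ specNorm M * evNorm (Mᵀ *ᵥ x) := evNorm_mulVec_le M _
    nlinarith [key, hpos]

lemma specNorm_transpose (M : Matrix (Fin n) (Fin m) ℝ) : specNorm Mᵀ = specNorm M :=
  le_antisymm (specNorm_transpose_le M) (by simpa using specNorm_transpose_le Mᵀ)

lemma dot_mulVec_le_specNorm (M : Matrix (Fin n) (Fin n) ℝ) (x : Fin n → ℝ) :
    x ⬝ᵥ (M *ᵥ x) ≤ specNorm M * evNorm x ^ 2 := by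
  calc x ⬝ᵥ (M *ᵥ x) ≤ evNorm x * evNorm (M *ᵥ x) := dot_le_evNorm _ _
    _ ≤ evNorm x * (specNorm M * evNorm x) :=
        mul_le_mul_of_nonneg_left (evNorm_mulVec_le M x) (evNorm_nonneg _)
    _ = specNorm M * evNorm x ^ 2 := by ring

end SpecNorm

section LambdaMin
variable {n : ℕ}

lemma lambdaMin_le_quad {M : Matrix (Fin n) (Fin n) ℝ} (hM : M.PosDef) (x : Fin n → ℝ) :
    lambdaMin M * evNorm x ^ 2 ≤ x ⬝ᵥ (M *ᵥ x) := by
  have hbdd : BddBelow {c : ℝ | ∃ y : Fin n → ℝ, evNorm y = 1 ∧ c = y ⬝ᵥ (M *ᵥ y)} := by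
    refine ⟨0, ?_⟩
    rintro c ⟨y, hy, rfl⟩
    have hy0 : y ≠ 0 := fun h => by simp [h, evNorm_zero] at hy
    have := hM.dotProduct_mulVec_pos hy0
    simpa using this.le
  rcases eq_or_ne x 0 with rfl | hx
  · simp [evNorm_zero]
  · have hpos := evNorm_pos hx
    have hmem : ((evNorm x)⁻¹ • x) ⬝ᵥ (M *ᵥ ((evNorm x)⁻¹ • x)) ∈
        {c : ℝ | ∃ y : Fin n → ℝ, evNorm y = 1 ∧ c = y ⬝ᵥ (M *ᵥ y)} := by
      refine ⟨_, ?_, rfl⟩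
      rw [evNorm_smul, abs_of_nonneg (inv_nonneg.2 hpos.le), inv_mul_cancel₀ hpos.ne']
    have hle := csInf_le hbdd hmem
    have heq : ((evNorm x)⁻¹ • x) ⬝ᵥ (M *ᵥ ((evNorm x)⁻¹ • x))
        = (evNorm x)⁻¹ * ((evNorm x)⁻¹ * (x ⬝ᵥ (M *ᵥ x))) := by
      rw [Matrix.mulVec_smul, smul_dotProduct, dotProduct_smul]
      simp [smul_eq_mul]
    rw [heq] at hle
    have h2 : lambdaMin M * evNorm x ^ 2 ≤ ((evNorm x)⁻¹ * ((evNorm x)⁻¹ * (x ⬝ᵥ (M *ᵥ x)))) * evNorm x ^ 2 :=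
      mul_le_mul_of_nonneg_right hle (sq_nonneg _)
    calc lambdaMin M * evNorm x ^ 2
        ≤ ((evNorm x)⁻¹ * ((evNorm x)⁻¹ * (x ⬝ᵥ (M *ᵥ x)))) * evNorm x ^ 2 := h2
      _ = (x ⬝ᵥ (M *ᵥ x)) * ((evNorm x)⁻¹ * evNorm x) ^ 2 := by ring
      _ = x ⬝ᵥ (M *ᵥ x) := by rw [inv_mul_cancel₀ hpos.ne']; ring

lemma evNorm_eq_norm (y : EuclideanSpace ℝ (Fin n)) :
    ‖y‖ = evNorm (WithLp.equiv 2 (Fin n → ℝ) y) := by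
  rw [EuclideanSpace.norm_eq]
  unfold evNorm
  congr 1
  exact Finset.sum_congr rfl fun i _ => by rw [Real.norm_eq_abs, sq_abs]; rfl

lemma quadform_continuous (M : Matrix (Fin n) (Fin n) ℝ) :
    Continuous fun x : Fin n → ℝ => x ⬝ᵥ (M *ᵥ x) := by
  simp only [dotProduct, Matrix.mulVec]
  apply continuous_finset_sum
  intro i _
  exact (continuous_apply i).mul
    (continuous_finset_sum _ fun j _ => continuous_const.mul (continuous_apply j))

lemma lambdaMin_pos {M : Matrix (Fin n) (Fin n) ℝ} (hn : 0 < n) (hM : M.PosDef) :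
    0 < lambdaMin M := by
  classical
  set φ := WithLp.equiv 2 (Fin n → ℝ) with hφ
  have hset : {c : ℝ | ∃ x : Fin n → ℝ, evNorm x = 1 ∧ c = x ⬝ᵥ (M *ᵥ x)}
      = (fun y : EuclideanSpace ℝ (Fin n) => (φ y) ⬝ᵥ (M *ᵥ (φ y))) '' (Metric.sphere 0 1) := by
    ext c
    constructor
    · rintro ⟨x, hx, rfl⟩
      refine ⟨φ.symm x, ?_, by simp⟩
      rw [mem_sphere_zero_iff_norm, evNorm_eq_norm]
      exact hx
    · rintro ⟨y, hy, rfl⟩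
      refine ⟨φ y, ?_, rfl⟩
      rw [← evNorm_eq_norm]
      exact mem_sphere_zero_iff_norm.1 hy
  have hcont : Continuous fun y : EuclideanSpace ℝ (Fin n) => (φ y) ⬝ᵥ (M *ᵥ (φ y)) :=
    (quadform_continuous M).comp (PiLp.continuous_ofLp (p := 2) (β := fun _ : Fin n => ℝ))
  have hcomp : IsCompact ((fun y : EuclideanSpace ℝ (Fin n) => (φ y) ⬝ᵥ (M *ᵥ (φ y))) '' (Metric.sphere 0 1)) :=
    (isCompact_sphere 0 1).image hcont
  have hne : ((fun y : EuclideanSpace ℝ (Fin n) => (φ y) ⬝ᵥ (M *ᵥ (φ y))) '' (Metric.sphere 0 1)).Nonempty := by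
    refine ⟨_, ⟨EuclideanSpace.single ⟨0, hn⟩ (1:ℝ), ?_, rfl⟩⟩
    rw [mem_sphere_zero_iff_norm, EuclideanSpace.norm_single]
    simp
  have hmem : lambdaMin M ∈
      (fun y : EuclideanSpace ℝ (Fin n) => (φ y) ⬝ᵥ (M *ᵥ (φ y))) '' (Metric.sphere 0 1) := by
    rw [lambdaMin, hset]
    exact hcomp.sInf_mem hne
  rcases hmem with ⟨y, hy, hval⟩
  have hy1 : evNorm (φ y) = 1 := by
    rw [← evNorm_eq_norm]; exact mem_sphere_zero_iff_norm.1 hy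
  have hy0 : φ y ≠ 0 := fun h => by simp [h, evNorm_zero] at hy1
  have := hM.dotProduct_mulVec_pos hy0
  rw [← hval]
  simpa using this


end LambdaMin


lemma dot_symm' {n m : ℕ} (M : Matrix (Fin n) (Fin m) ℝ) (x : Fin n → ℝ) (y : Fin m → ℝ) :
    x ⬝ᵥ (M *ᵥ y) = y ⬝ᵥ (Mᵀ *ᵥ x) := by
  simp only [dotProduct, Matrix.mulVec, Matrix.transpose_apply, Finset.mul_sum, Finset.sum_mul]
  rw [Finset.sum_comm]
  exact Finset.sum_congr rfl fun i _ => Finset.sum_congr rfl fun j _ => by ring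

lemma dot_shift {n m : ℕ} (M : Matrix (Fin n) (Fin m) ℝ) (x : Fin m → ℝ) (y : Fin n → ℝ) :
    (M *ᵥ x) ⬝ᵥ y = x ⬝ᵥ (Mᵀ *ᵥ y) := by
  rw [dotProduct_comm, dot_symm']

set_option maxHeartbeats 1000000 in
lemma step_id {n m : ℕ} (A Q P F : Matrix (Fin n) (Fin n) ℝ)
    (B : Matrix (Fin n) (Fin m) ℝ) (R N : Matrix (Fin m) (Fin m) ℝ)
    (hPs : Pᵀ = P) (hNs : Nᵀ = N)
    (hN1 : (R + Bᵀ * P * B) * N = 1) (hN2 : N * (R + Bᵀ * P * B) = 1)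
    (hDARE : P = Q + Aᵀ * P * A - Aᵀ * P * B * N * (Bᵀ * P * A))
    (hF : F = A - B * (N * (Bᵀ * P * A)))
    (x w ρ : Fin n → ℝ) (u : Fin m → ℝ) :
    (x ⬝ᵥ (Q *ᵥ x) + u ⬝ᵥ (R *ᵥ u))
      + (((A *ᵥ x + B *ᵥ u + w) ⬝ᵥ (P *ᵥ (A *ᵥ x + B *ᵥ u + w)))
         + 2 * (ρ ⬝ᵥ (F *ᵥ (A *ᵥ x + B *ᵥ u + w))))
    = (x ⬝ᵥ (P *ᵥ x) + 2 * ((P *ᵥ w + Fᵀ *ᵥ ρ) ⬝ᵥ (F *ᵥ x)))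
      + (w ⬝ᵥ (P *ᵥ w) + 2 * (ρ ⬝ᵥ (F *ᵥ w))
         - (P *ᵥ w + Fᵀ *ᵥ ρ) ⬝ᵥ ((B * N * Bᵀ) *ᵥ (P *ᵥ w + Fᵀ *ᵥ ρ)))
      + (u + (N * Bᵀ) *ᵥ (P *ᵥ (A *ᵥ x) + (P *ᵥ w + Fᵀ *ᵥ ρ)))
          ⬝ᵥ ((R + Bᵀ * P * B) *ᵥ (u + (N * Bᵀ) *ᵥ (P *ᵥ (A *ᵥ x) + (P *ᵥ w + Fᵀ *ᵥ ρ)))) := by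
  have hPsym : ∀ a b : Fin n → ℝ, a ⬝ᵥ (P *ᵥ b) = b ⬝ᵥ (P *ᵥ a) := fun a b => by
    rw [dot_symm', hPs]
  set ax := A *ᵥ x with hax
  set bu := B *ᵥ u with hbu
  set s := P *ᵥ w + Fᵀ *ᵥ ρ with hs
  set Smat := R + Bᵀ * P * B with hSmat
  set Hm := B * N * Bᵀ with hHm
  set z := P *ᵥ ax + s with hz
  set g := u + (N * Bᵀ) *ᵥ z with hg
  have hHsym : Hmᵀ = Hm := by
    rw [hHm, Matrix.transpose_mul, Matrix.transpose_mul, Matrix.transpose_transpose, hNs,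
      Matrix.mul_assoc]
  have hHsymd : ∀ a b : Fin n → ℝ, a ⬝ᵥ (Hm *ᵥ b) = b ⬝ᵥ (Hm *ᵥ a) := fun a b => by
    rw [dot_symm', hHsym]
  have h_y : (ax + bu + w) ⬝ᵥ (P *ᵥ (ax + bu + w))
      = ax ⬝ᵥ (P *ᵥ ax) + bu ⬝ᵥ (P *ᵥ bu) + w ⬝ᵥ (P *ᵥ w)
        + 2 * (ax ⬝ᵥ (P *ᵥ bu)) + 2 * (ax ⬝ᵥ (P *ᵥ w)) + 2 * (bu ⬝ᵥ (P *ᵥ w)) := by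
    simp only [Matrix.mulVec_add, dotProduct_add, add_dotProduct]
    linarith [hPsym bu ax, hPsym w ax, hPsym w bu]
  have h_f : ρ ⬝ᵥ (F *ᵥ (ax + bu + w))
      = ρ ⬝ᵥ (F *ᵥ ax) + ρ ⬝ᵥ (F *ᵥ bu) + ρ ⬝ᵥ (F *ᵥ w) := by
    simp only [Matrix.mulVec_add, dotProduct_add]
  have e1 : Smat *ᵥ ((N * Bᵀ) *ᵥ z) = Bᵀ *ᵥ z := by
    rw [Matrix.mulVec_mulVec, ← Matrix.mul_assoc, hN1, Matrix.one_mul]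
  have e2 : u ⬝ᵥ (Bᵀ *ᵥ z) = z ⬝ᵥ bu := by
    rw [dot_symm', Matrix.transpose_transpose, ← hbu]
  have e3 : ((N * Bᵀ) *ᵥ z) ⬝ᵥ (Smat *ᵥ u) = z ⬝ᵥ bu := by
    rw [dot_shift, Matrix.transpose_mul, Matrix.transpose_transpose, hNs,
      Matrix.mulVec_mulVec, Matrix.mul_assoc, hN2, Matrix.mul_one, ← hbu]
  have e4 : ((N * Bᵀ) *ᵥ z) ⬝ᵥ (Bᵀ *ᵥ z) = z ⬝ᵥ (Hm *ᵥ z) := by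
    rw [dot_shift, Matrix.transpose_mul, Matrix.transpose_transpose, hNs,
      Matrix.mulVec_mulVec, hHm, Matrix.mul_assoc]
  have h_g : g ⬝ᵥ (Smat *ᵥ g)
      = u ⬝ᵥ (Smat *ᵥ u) + 2 * (z ⬝ᵥ bu) + z ⬝ᵥ (Hm *ᵥ z) := by
    rw [hg]
    simp only [Matrix.mulVec_add, dotProduct_add, add_dotProduct, e1]
    linarith [e2, e3, e4]
  have h_S : u ⬝ᵥ (Smat *ᵥ u) = u ⬝ᵥ (R *ᵥ u) + bu ⬝ᵥ (P *ᵥ bu) := by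
    rw [hSmat, Matrix.add_mulVec, dotProduct_add]
    congr 1
    rw [hbu, Matrix.mulVec_mulVec, dot_shift, Matrix.mulVec_mulVec, Matrix.mul_assoc]
  have h_zbu : z ⬝ᵥ bu = ax ⬝ᵥ (P *ᵥ bu) + w ⬝ᵥ (P *ᵥ bu) + ρ ⬝ᵥ (F *ᵥ bu) := by
    rw [hz, hs]
    simp only [add_dotProduct]
    rw [dot_shift P ax bu, dot_shift P w bu, dot_shift Fᵀ ρ bu, hPs,
      Matrix.transpose_transpose]
    ring
  have h_z : z ⬝ᵥ (Hm *ᵥ z)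
      = (P *ᵥ ax) ⬝ᵥ (Hm *ᵥ (P *ᵥ ax)) + 2 * ((P *ᵥ ax) ⬝ᵥ (Hm *ᵥ s)) + s ⬝ᵥ (Hm *ᵥ s) := by
    rw [hz]
    simp only [Matrix.mulVec_add, dotProduct_add, add_dotProduct]
    linarith [hHsymd s (P *ᵥ ax)]
  have hd1 : x ⬝ᵥ ((Aᵀ * P * A) *ᵥ x) = ax ⬝ᵥ (P *ᵥ ax) := by
    rw [hax, Matrix.mulVec_mulVec, dot_shift, Matrix.mulVec_mulVec, Matrix.mul_assoc]
  have hd2 : (P *ᵥ ax) ⬝ᵥ (Hm *ᵥ (P *ᵥ ax)) = x ⬝ᵥ ((Aᵀ * P * B * N * (Bᵀ * P * A)) *ᵥ x) := by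
    rw [hax, Matrix.mulVec_mulVec, Matrix.mulVec_mulVec, dot_shift, Matrix.mulVec_mulVec,
      Matrix.transpose_mul, hPs]
    rw [hHm]
    simp only [Matrix.mul_assoc]
  have h_dare : x ⬝ᵥ (P *ᵥ x) = x ⬝ᵥ (Q *ᵥ x) + x ⬝ᵥ ((Aᵀ * P * A) *ᵥ x)
      - x ⬝ᵥ ((Aᵀ * P * B * N * (Bᵀ * P * A)) *ᵥ x) := by
    conv_lhs => rw [hDARE]
    rw [Matrix.sub_mulVec, Matrix.add_mulVec, dotProduct_sub, dotProduct_add]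
  have hFH : F + Hm * (P * A) = A := by
    have hmx2 : B * N * Bᵀ * (P * A) = B * (N * (Bᵀ * P * A)) := by
      simp only [Matrix.mul_assoc]
    rw [hF, hHm, hmx2, sub_add_cancel]
  have c1 : (P *ᵥ ax) ⬝ᵥ (Hm *ᵥ s) = s ⬝ᵥ ((Hm * (P * A)) *ᵥ x) := by
    conv_lhs => rw [hHsymd]
    rw [hax, Matrix.mulVec_mulVec, Matrix.mulVec_mulVec]
    simp only [Matrix.mul_assoc]
  have c2 : s ⬝ᵥ (F *ᵥ x) + s ⬝ᵥ ((Hm * (P * A)) *ᵥ x) = s ⬝ᵥ (A *ᵥ x) := by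
    rw [← dotProduct_add, ← Matrix.add_mulVec, hFH]
  have c3 : s ⬝ᵥ (A *ᵥ x) = ax ⬝ᵥ (P *ᵥ w) + ρ ⬝ᵥ (F *ᵥ ax) := by
    rw [hs, add_dotProduct, ← hax, dot_shift P w ax, dot_shift Fᵀ ρ ax, hPs,
      Matrix.transpose_transpose, hPsym w ax]
  have h_cross : ax ⬝ᵥ (P *ᵥ w) + ρ ⬝ᵥ (F *ᵥ ax)
      = s ⬝ᵥ (F *ᵥ x) + (P *ᵥ ax) ⬝ᵥ (Hm *ᵥ s) := by
    linarith [c1, c2, c3]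
  linarith [h_y, h_f, h_g, h_S, h_zbu, h_z, h_dare, hd1, hd2, h_cross, hPsym w bu]

noncomputable def rv {n : ℕ} (T : ℕ) (F P : Matrix (Fin n) (Fin n) ℝ)
    (w : ℕ → Fin n → ℝ) (t : ℕ) : Fin n → ℝ :=
  ∑ i ∈ Finset.range (T - t), ((Fᵀ) ^ i * P) *ᵥ w (t + i)

lemma rv_ge {n : ℕ} (T : ℕ) (F P : Matrix (Fin n) (Fin n) ℝ) (w : ℕ → Fin n → ℝ)
    {t : ℕ} (h : T ≤ t) : rv T F P w t = 0 := by
  unfold rv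
  rw [Nat.sub_eq_zero_of_le h]
  simp

lemma rv_succ {n : ℕ} (T : ℕ) (F P : Matrix (Fin n) (Fin n) ℝ) (w : ℕ → Fin n → ℝ)
    {t : ℕ} (h : t < T) : rv T F P w t = P *ᵥ w t + Fᵀ *ᵥ rv T F P w (t + 1) := by
  unfold rv
  have hT : T - t = (T - (t + 1)) + 1 := by omega
  rw [hT, Finset.sum_range_succ']
  have h0 : ((Fᵀ) ^ 0 * P) *ᵥ w (t + 0) = P *ᵥ w t := by simp
  rw [h0, add_comm]
  congr 1
  have hsum : Fᵀ *ᵥ (∑ i ∈ Finset.range (T - (t + 1)), ((Fᵀ) ^ i * P) *ᵥ w (t + 1 + i))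
      = ∑ i ∈ Finset.range (T - (t + 1)), Fᵀ *ᵥ (((Fᵀ) ^ i * P) *ᵥ w (t + 1 + i)) := by
    rw [show ∀ v : Fin n → ℝ, Fᵀ *ᵥ v = Matrix.mulVecLin Fᵀ v from fun v => rfl]
    exact map_sum (Matrix.mulVecLin Fᵀ) _ _
  rw [hsum]
  refine Finset.sum_congr rfl fun i _ => ?_
  rw [Matrix.mulVec_mulVec, pow_succ', Matrix.mul_assoc,
    show t + (i + 1) = t + 1 + i from by omega]

set_option maxHeartbeats 1000000 in
lemma cost_id {n m T : ℕ} (A Q P F : Matrix (Fin n) (Fin n) ℝ)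
    (B : Matrix (Fin n) (Fin m) ℝ) (R N : Matrix (Fin m) (Fin m) ℝ)
    (hPs : Pᵀ = P) (hNs : Nᵀ = N)
    (hN1 : (R + Bᵀ * P * B) * N = 1) (hN2 : N * (R + Bᵀ * P * B) = 1)
    (hDARE : P = Q + Aᵀ * P * A - Aᵀ * P * B * N * (Bᵀ * P * A))
    (hF : F = A - B * (N * (Bᵀ * P * A)))
    (x0 : Fin n → ℝ) (w : ℕ → Fin n → ℝ) (v : ℕ → Fin m → ℝ) :
    trajCost A B Q R P x0 w T v
      = (x0 ⬝ᵥ (P *ᵥ x0) + 2 * (rv T F P w 0 ⬝ᵥ (F *ᵥ x0)))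
        + (∑ t ∈ Finset.range T,
            (w t ⬝ᵥ (P *ᵥ w t) + 2 * (rv T F P w (t + 1) ⬝ᵥ (F *ᵥ w t))
              - rv T F P w t ⬝ᵥ ((B * N * Bᵀ) *ᵥ rv T F P w t)))
        + ∑ t ∈ Finset.range T,
            ((v t + (N * Bᵀ) *ᵥ (P *ᵥ (A *ᵥ seqState A B x0 v w t) + rv T F P w t))
              ⬝ᵥ ((R + Bᵀ * P * B) *ᵥ
                 (v t + (N * Bᵀ) *ᵥ (P *ᵥ (A *ᵥ seqState A B x0 v w t) + rv T F P w t)))) := by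
  set xs := seqState A B x0 v w with hxs
  set r := rv T F P w with hr
  have hVstep : ∀ t ∈ Finset.range T,
      (xs t ⬝ᵥ (Q *ᵥ xs t) + v t ⬝ᵥ (R *ᵥ v t))
        + ((xs (t + 1) ⬝ᵥ (P *ᵥ xs (t + 1)) + 2 * (r (t + 1) ⬝ᵥ (F *ᵥ xs (t + 1))))
           - (xs t ⬝ᵥ (P *ᵥ xs t) + 2 * (r t ⬝ᵥ (F *ᵥ xs t))))
      = (w t ⬝ᵥ (P *ᵥ w t) + 2 * (r (t + 1) ⬝ᵥ (F *ᵥ w t))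
          - r t ⬝ᵥ ((B * N * Bᵀ) *ᵥ r t))
        + ((v t + (N * Bᵀ) *ᵥ (P *ᵥ (A *ᵥ xs t) + r t))
            ⬝ᵥ ((R + Bᵀ * P * B) *ᵥ (v t + (N * Bᵀ) *ᵥ (P *ᵥ (A *ᵥ xs t) + r t)))) := by
    intro t ht
    have htT : t < T := Finset.mem_range.1 ht
    have hstep := step_id A Q P F B R N hPs hNs hN1 hN2 hDARE hF
      (xs t) (w t) (r (t + 1)) (v t)
    rw [← rv_succ T F P w htT, ← hr] at hstep
    have hnext : xs (t + 1) = A *ᵥ xs t + B *ᵥ v t + w t := by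
      rw [hxs]; rfl
    rw [hnext]
    linarith [hstep]
  have htel : ∑ t ∈ Finset.range T,
      ((xs (t + 1) ⬝ᵥ (P *ᵥ xs (t + 1)) + 2 * (r (t + 1) ⬝ᵥ (F *ᵥ xs (t + 1))))
       - (xs t ⬝ᵥ (P *ᵥ xs t) + 2 * (r t ⬝ᵥ (F *ᵥ xs t))))
      = (xs T ⬝ᵥ (P *ᵥ xs T) + 2 * (r T ⬝ᵥ (F *ᵥ xs T)))
        - (xs 0 ⬝ᵥ (P *ᵥ xs 0) + 2 * (r 0 ⬝ᵥ (F *ᵥ xs 0))) :=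
    Finset.sum_range_sub (fun t => xs t ⬝ᵥ (P *ᵥ xs t) + 2 * (r t ⬝ᵥ (F *ᵥ xs t))) T
  have hsum := Finset.sum_congr rfl hVstep
  rw [Finset.sum_add_distrib, htel, Finset.sum_add_distrib] at hsum
  have hrT : r T = 0 := by rw [hr]; exact rv_ge T F P w le_rfl
  have hx0 : xs 0 = x0 := rfl
  rw [hrT, hx0] at hsum
  simp only [zero_dotProduct, mul_zero, add_zero] at hsum
  rw [Finset.sum_add_distrib] at hsum
  unfold trajCost
  rw [← hxs, Finset.sum_add_distrib]
  linarith [hsum]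

lemma c_step {n : ℕ} (P F : Matrix (Fin n) (Fin n) ℝ)
    (hPs : Pᵀ = P) (hPis : (P⁻¹)ᵀ = P⁻¹) (hPi1 : P * P⁻¹ = 1)
    (a ρ wv : Fin n → ℝ) (hw : wv = P⁻¹ *ᵥ (a - Fᵀ *ᵥ ρ)) :
    wv ⬝ᵥ (P *ᵥ wv) + 2 * (ρ ⬝ᵥ (F *ᵥ wv))
      = a ⬝ᵥ (P⁻¹ *ᵥ a) - ρ ⬝ᵥ ((F * P⁻¹ * Fᵀ) *ᵥ ρ) := by
  have hPw : P *ᵥ wv = a - Fᵀ *ᵥ ρ := by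
    rw [hw, Matrix.mulVec_mulVec, hPi1, Matrix.one_mulVec]
  have h1 : wv ⬝ᵥ (P *ᵥ wv) = (a - Fᵀ *ᵥ ρ) ⬝ᵥ (P⁻¹ *ᵥ (a - Fᵀ *ᵥ ρ)) := by
    rw [hPw, hw, dot_shift, hPis]
  have h2 : (a - Fᵀ *ᵥ ρ) ⬝ᵥ (P⁻¹ *ᵥ (a - Fᵀ *ᵥ ρ))
      = a ⬝ᵥ (P⁻¹ *ᵥ a) - 2 * (a ⬝ᵥ (P⁻¹ *ᵥ (Fᵀ *ᵥ ρ)))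
        + (Fᵀ *ᵥ ρ) ⬝ᵥ (P⁻¹ *ᵥ (Fᵀ *ᵥ ρ)) := by
    simp only [Matrix.mulVec_sub, dotProduct_sub, sub_dotProduct]
    have hsym : (Fᵀ *ᵥ ρ) ⬝ᵥ (P⁻¹ *ᵥ a) = a ⬝ᵥ (P⁻¹ *ᵥ (Fᵀ *ᵥ ρ)) := by
      rw [dot_symm', hPis]
    linarith [hsym]
  have h3 : (Fᵀ *ᵥ ρ) ⬝ᵥ (P⁻¹ *ᵥ (Fᵀ *ᵥ ρ)) = ρ ⬝ᵥ ((F * P⁻¹ * Fᵀ) *ᵥ ρ) := by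
    rw [dot_shift, Matrix.transpose_transpose, Matrix.mulVec_mulVec, Matrix.mulVec_mulVec,
      Matrix.mul_assoc]
  have h4 : ρ ⬝ᵥ (F *ᵥ wv) = ρ ⬝ᵥ ((F * P⁻¹) *ᵥ a) - ρ ⬝ᵥ ((F * P⁻¹ * Fᵀ) *ᵥ ρ) := by
    rw [hw, Matrix.mulVec_mulVec, Matrix.mulVec_sub, dotProduct_sub, Matrix.mulVec_mulVec]
  have h5 : a ⬝ᵥ (P⁻¹ *ᵥ (Fᵀ *ᵥ ρ)) = ρ ⬝ᵥ ((F * P⁻¹) *ᵥ a) := by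
    rw [Matrix.mulVec_mulVec, dot_symm', Matrix.transpose_mul, hPis, Matrix.transpose_transpose]
  linarith [h1, h2, h3, h4, h5]

lemma x0_sq {n : ℕ} (P F : Matrix (Fin n) (Fin n) ℝ)
    (hP : P.PosDef) (hPs : Pᵀ = P) (hPis : (P⁻¹)ᵀ = P⁻¹)
    (hPi1 : P * P⁻¹ = 1) (hPi2 : P⁻¹ * P = 1)
    (x0 r0 : Fin n → ℝ) :
    -(r0 ⬝ᵥ ((F * P⁻¹ * Fᵀ) *ᵥ r0)) ≤ x0 ⬝ᵥ (P *ᵥ x0) + 2 * (r0 ⬝ᵥ (F *ᵥ x0)) := by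
  set q := P⁻¹ *ᵥ (Fᵀ *ᵥ r0) with hq
  have hnn : 0 ≤ (x0 + q) ⬝ᵥ (P *ᵥ (x0 + q)) := by
    have := hP.posSemidef.dotProduct_mulVec_nonneg (x0 + q)
    simpa using this
  have hcross : q ⬝ᵥ (P *ᵥ x0) = r0 ⬝ᵥ (F *ᵥ x0) := by
    rw [hq, dot_shift, hPis, Matrix.mulVec_mulVec, hPi2, Matrix.one_mulVec, dot_shift,
      Matrix.transpose_transpose]
  have hsymc : x0 ⬝ᵥ (P *ᵥ q) = q ⬝ᵥ (P *ᵥ x0) := by rw [dot_symm', hPs]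
  have hqq : q ⬝ᵥ (P *ᵥ q) = r0 ⬝ᵥ ((F * P⁻¹ * Fᵀ) *ᵥ r0) := by
    have hPq : P *ᵥ q = Fᵀ *ᵥ r0 := by
      rw [hq, Matrix.mulVec_mulVec, hPi1, Matrix.one_mulVec]
    rw [hPq, hq, dot_shift, hPis, Matrix.mulVec_mulVec, dot_shift,
      Matrix.transpose_transpose, Matrix.mulVec_mulVec]
    simp only [Matrix.mul_assoc]
  have hexp : (x0 + q) ⬝ᵥ (P *ᵥ (x0 + q))
      = x0 ⬝ᵥ (P *ᵥ x0) + 2 * (r0 ⬝ᵥ (F *ᵥ x0)) + r0 ⬝ᵥ ((F * P⁻¹ * Fᵀ) *ᵥ r0) := by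
    simp only [Matrix.mulVec_add, dotProduct_add, add_dotProduct]
    linarith [hcross, hsymc, hqq]
  linarith [hnn, hexp]

set_option maxHeartbeats 800000 in
lemma sum_c {n T : ℕ} (P F Hm : Matrix (Fin n) (Fin n) ℝ)
    (hPs : Pᵀ = P) (hPis : (P⁻¹)ᵀ = P⁻¹) (hPi1 : P * P⁻¹ = 1) (hPi2 : P⁻¹ * P = 1)
    (w : ℕ → Fin n → ℝ) :
    ∑ t ∈ Finset.range T,
        (w t ⬝ᵥ (P *ᵥ w t) + 2 * (rv T F P w (t + 1) ⬝ᵥ (F *ᵥ w t))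
          - rv T F P w t ⬝ᵥ (Hm *ᵥ rv T F P w t))
      = (∑ t ∈ Finset.range T,
          rv T F P w t ⬝ᵥ ((P⁻¹ - F * P⁻¹ * Fᵀ - Hm) *ᵥ rv T F P w t))
        + rv T F P w 0 ⬝ᵥ ((F * P⁻¹ * Fᵀ) *ᵥ rv T F P w 0) := by
  set r := rv T F P w with hr
  have hstep : ∀ t ∈ Finset.range T,
      w t ⬝ᵥ (P *ᵥ w t) + 2 * (r (t + 1) ⬝ᵥ (F *ᵥ w t)) - r t ⬝ᵥ (Hm *ᵥ r t)
        = (r t ⬝ᵥ (P⁻¹ *ᵥ r t) - r t ⬝ᵥ (Hm *ᵥ r t))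
          - r (t + 1) ⬝ᵥ ((F * P⁻¹ * Fᵀ) *ᵥ r (t + 1)) := by
    intro t ht
    have htT : t < T := Finset.mem_range.1 ht
    have hw : w t = P⁻¹ *ᵥ (r t - Fᵀ *ᵥ r (t + 1)) := by
      rw [hr, rv_succ T F P w htT, add_sub_cancel_right, Matrix.mulVec_mulVec, hPi2,
        Matrix.one_mulVec]
    have := c_step P F hPs hPis hPi1 (r t) (r (t + 1)) (w t) hw
    linarith [this]
  rw [Finset.sum_congr rfl hstep]
  have hshift : ∑ t ∈ Finset.range T, r (t + 1) ⬝ᵥ ((F * P⁻¹ * Fᵀ) *ᵥ r (t + 1))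
      = (∑ t ∈ Finset.range T, r t ⬝ᵥ ((F * P⁻¹ * Fᵀ) *ᵥ r t))
        - r 0 ⬝ᵥ ((F * P⁻¹ * Fᵀ) *ᵥ r 0) := by
    have h1 := Finset.sum_range_succ' (fun t => r t ⬝ᵥ ((F * P⁻¹ * Fᵀ) *ᵥ r t)) T
    have h2 := Finset.sum_range_succ (fun t => r t ⬝ᵥ ((F * P⁻¹ * Fᵀ) *ᵥ r t)) T
    have hrT : r T = 0 := by rw [hr]; exact rv_ge T F P w le_rfl
    rw [hrT] at h2
    simp only [zero_dotProduct, Matrix.mulVec_zero, add_zero] at h2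
    linarith [h1, h2]
  have hexp : ∀ t ∈ Finset.range T,
      r t ⬝ᵥ ((P⁻¹ - F * P⁻¹ * Fᵀ - Hm) *ᵥ r t)
        = r t ⬝ᵥ (P⁻¹ *ᵥ r t) - r t ⬝ᵥ ((F * P⁻¹ * Fᵀ) *ᵥ r t) - r t ⬝ᵥ (Hm *ᵥ r t) := by
    intro t _
    simp only [Matrix.sub_mulVec, dotProduct_sub]
  rw [Finset.sum_congr rfl hexp]
  simp only [Finset.sum_sub_distrib]
  linarith [hshift]

lemma quadH {n m : ℕ} (P : Matrix (Fin n) (Fin n) ℝ) (B : Matrix (Fin n) (Fin m) ℝ)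
    (R N : Matrix (Fin m) (Fin m) ℝ) (hNs : Nᵀ = N)
    (hN1 : (R + Bᵀ * P * B) * N = 1)
    (d : Fin n → ℝ) :
    ((N * Bᵀ) *ᵥ d) ⬝ᵥ ((R + Bᵀ * P * B) *ᵥ ((N * Bᵀ) *ᵥ d))
      = d ⬝ᵥ ((B * N * Bᵀ) *ᵥ d) := by
  have e1 : (R + Bᵀ * P * B) *ᵥ ((N * Bᵀ) *ᵥ d) = Bᵀ *ᵥ d := by
    rw [Matrix.mulVec_mulVec, ← Matrix.mul_assoc, hN1, Matrix.one_mul]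
  rw [e1, dot_shift, Matrix.transpose_mul, Matrix.transpose_transpose, hNs,
    Matrix.mulVec_mulVec, Matrix.mul_assoc]

lemma dv_eq {n : ℕ} (T k : ℕ) (F P : Matrix (Fin n) (Fin n) ℝ) (w : ℕ → Fin n → ℝ) (t : ℕ) :
    rv T F P w t - (∑ i ∈ Finset.range (min k (T - t)), ((Fᵀ) ^ i * P) *ᵥ w (t + i))
      = ((Fᵀ) ^ k) *ᵥ rv T F P w (t + k) := by
  rcases le_or_gt (T - t) k with h | h
  · have hmin : min k (T - t) = T - t := min_eq_right h
    have h0 : rv T F P w (t + k) = 0 := rv_ge T F P w (by omega)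
    rw [hmin, h0, Matrix.mulVec_zero]
    rw [show (∑ i ∈ Finset.range (T - t), ((Fᵀ) ^ i * P) *ᵥ w (t + i)) = rv T F P w t from rfl]
    exact sub_self _
  · have hmin : min k (T - t) = k := min_eq_left h.le
    rw [hmin]
    have hsub : rv T F P w t - (∑ i ∈ Finset.range k, ((Fᵀ) ^ i * P) *ᵥ w (t + i))
        = ∑ i ∈ Finset.Ico k (T - t), ((Fᵀ) ^ i * P) *ᵥ w (t + i) := by
      rw [Finset.sum_Ico_eq_sub _ h.le]
      rfl
    rw [hsub, Finset.sum_Ico_eq_sum_range]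
    have hrhs : ((Fᵀ) ^ k) *ᵥ rv T F P w (t + k)
        = ∑ i ∈ Finset.range (T - t - k), ((Fᵀ) ^ k) *ᵥ (((Fᵀ) ^ i * P) *ᵥ w (t + k + i)) := by
      unfold rv
      rw [show T - (t + k) = T - t - k from by omega,
        show ∀ v : Fin n → ℝ, (Fᵀ) ^ k *ᵥ v = Matrix.mulVecLin ((Fᵀ) ^ k) v from fun v => rfl]
      exact map_sum (Matrix.mulVecLin ((Fᵀ) ^ k)) _ _
    rw [hrhs]
    refine Finset.sum_congr rfl fun i _ => ?_
    rw [Matrix.mulVec_mulVec, pow_add, Matrix.mul_assoc,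
      show t + (k + i) = t + k + i from by omega]

end Aux14

set_option maxHeartbeats 2000000 in
theorem stmt14 (n m T k : ℕ)
    (A : Matrix (Fin n) (Fin n) ℝ) (B : Matrix (Fin n) (Fin m) ℝ)
    (Q : Matrix (Fin n) (Fin n) ℝ) (R : Matrix (Fin m) (Fin m) ℝ)
    (P : Matrix (Fin n) (Fin n) ℝ)
    (hQ : Q.PosSemidef) (hR : R.PosDef) (hP : P.PosDef)
    (hDARE : P = Q + Aᵀ * P * A - Aᵀ * P * B * (R + Bᵀ * P * B)⁻¹ * (Bᵀ * P * A))
    (F : Matrix (Fin n) (Fin n) ℝ)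
    (hF : F = A - B * ((R + Bᵀ * P * B)⁻¹ * (Bᵀ * P * A)))
    (Hmat : Matrix (Fin n) (Fin n) ℝ)
    (hHmat : Hmat = B * (R + Bᵀ * P * B)⁻¹ * Bᵀ)
    (hPD : (P⁻¹ - F * P⁻¹ * Fᵀ - Hmat).PosDef)
    (x0 : Fin n → ℝ) (w : ℕ → Fin n → ℝ)
    (x : ℕ → Fin n → ℝ) (u : ℕ → Fin m → ℝ)
    (hx0 : x 0 = x0)
    (hx : ∀ t, x (t + 1) = A *ᵥ x t + B *ᵥ u t + w t)
    (hu : ∀ t, u t = -((((R + Bᵀ * P * B)⁻¹ * Bᵀ) *ᵥ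
        (P *ᵥ (A *ᵥ x t)
          + ∑ i ∈ Finset.range (min k (T - t)), ((Fᵀ) ^ i * P) *ᵥ w (t + i))))) :
    trajCost A B Q R P x0 w T u ≤
      (1 + specNorm (F ^ k) ^ 2 * specNorm Hmat
          / lambdaMin (P⁻¹ - F * P⁻¹ * Fᵀ - Hmat))
        * ⨅ v : ℕ → Fin m → ℝ, trajCost A B Q R P x0 w T v := by
  classical
  open Aux14 in
  -- basic symmetry / invertibility facts
  have hPsT : Pᵀ = P := by
    have := hP.1
    rwa [Matrix.IsHermitian, conjTranspose_eq_transpose_of_trivial] at this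
  have hSpsd : (Bᵀ * P * B).PosSemidef := by
    have := hP.posSemidef.conjTranspose_mul_mul_same B
    simpa using this
  have hSpd : (R + Bᵀ * P * B).PosDef := hR.add_posSemidef hSpsd
  have hSsT : (R + Bᵀ * P * B)ᵀ = R + Bᵀ * P * B := by
    have := hSpd.1
    rwa [Matrix.IsHermitian, conjTranspose_eq_transpose_of_trivial] at this
  have hSdet : IsUnit (R + Bᵀ * P * B).det :=
    (Matrix.isUnit_iff_isUnit_det _).mp hSpd.isUnit
  have hN1 : (R + Bᵀ * P * B) * (R + Bᵀ * P * B)⁻¹ = 1 := Matrix.mul_nonsing_inv _ hSdet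
  have hN2 : (R + Bᵀ * P * B)⁻¹ * (R + Bᵀ * P * B) = 1 := Matrix.nonsing_inv_mul _ hSdet
  have hNsT : ((R + Bᵀ * P * B)⁻¹)ᵀ = (R + Bᵀ * P * B)⁻¹ := by
    rw [Matrix.transpose_nonsing_inv, hSsT]
  have hPdet : IsUnit P.det := (Matrix.isUnit_iff_isUnit_det _).mp hP.isUnit
  have hPi1 : P * P⁻¹ = 1 := Matrix.mul_nonsing_inv _ hPdet
  have hPi2 : P⁻¹ * P = 1 := Matrix.nonsing_inv_mul _ hPdet
  have hPisT : (P⁻¹)ᵀ = P⁻¹ := by rw [Matrix.transpose_nonsing_inv, hPsT]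
  -- cost identity (with Hmat folded)
  have hcost : ∀ v : ℕ → Fin m → ℝ,
      trajCost A B Q R P x0 w T v
        = (x0 ⬝ᵥ (P *ᵥ x0) + 2 * (rv T F P w 0 ⬝ᵥ (F *ᵥ x0)))
          + (∑ t ∈ Finset.range T,
              (w t ⬝ᵥ (P *ᵥ w t) + 2 * (rv T F P w (t + 1) ⬝ᵥ (F *ᵥ w t))
                - rv T F P w t ⬝ᵥ (Hmat *ᵥ rv T F P w t)))
          + ∑ t ∈ Finset.range T,
              ((v t + ((R + Bᵀ * P * B)⁻¹ * Bᵀ) *ᵥ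
                  (P *ᵥ (A *ᵥ seqState A B x0 v w t) + rv T F P w t))
                ⬝ᵥ ((R + Bᵀ * P * B) *ᵥ
                  (v t + ((R + Bᵀ * P * B)⁻¹ * Bᵀ) *ᵥ
                    (P *ᵥ (A *ᵥ seqState A B x0 v w t) + rv T F P w t)))) := by
    intro v
    have := cost_id (T := T) A Q P F B R ((R + Bᵀ * P * B)⁻¹) hPsT hNsT hN1 hN2 hDARE hF x0 w v
    rwa [← hHmat] at this
  -- abbreviations as plain terms
  have hgq_nonneg : ∀ (v : ℕ → Fin m → ℝ) (t : ℕ) (g : Fin m → ℝ),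
      0 ≤ g ⬝ᵥ ((R + Bᵀ * P * B) *ᵥ g) := by
    intro v t g
    simpa using hSpd.posSemidef.dotProduct_mulVec_nonneg g
  have hGle : ∀ v : ℕ → Fin m → ℝ,
      (x0 ⬝ᵥ (P *ᵥ x0) + 2 * (rv T F P w 0 ⬝ᵥ (F *ᵥ x0)))
        + (∑ t ∈ Finset.range T,
            (w t ⬝ᵥ (P *ᵥ w t) + 2 * (rv T F P w (t + 1) ⬝ᵥ (F *ᵥ w t))
              - rv T F P w t ⬝ᵥ (Hmat *ᵥ rv T F P w t)))
        ≤ trajCost A B Q R P x0 w T v := by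
    intro v
    rw [hcost v]
    have hnn : 0 ≤ ∑ t ∈ Finset.range T,
        ((v t + ((R + Bᵀ * P * B)⁻¹ * Bᵀ) *ᵥ
            (P *ᵥ (A *ᵥ seqState A B x0 v w t) + rv T F P w t))
          ⬝ᵥ ((R + Bᵀ * P * B) *ᵥ
            (v t + ((R + Bᵀ * P * B)⁻¹ * Bᵀ) *ᵥ
              (P *ᵥ (A *ᵥ seqState A B x0 v w t) + rv T F P w t)))) :=
      Finset.sum_nonneg fun t _ => hgq_nonneg v t _
    linarith
  have hGOPT :
      (x0 ⬝ᵥ (P *ᵥ x0) + 2 * (rv T F P w 0 ⬝ᵥ (F *ᵥ x0)))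
        + (∑ t ∈ Finset.range T,
            (w t ⬝ᵥ (P *ᵥ w t) + 2 * (rv T F P w (t + 1) ⬝ᵥ (F *ᵥ w t))
              - rv T F P w t ⬝ᵥ (Hmat *ᵥ rv T F P w t)))
      ≤ ⨅ v : ℕ → Fin m → ℝ, trajCost A B Q R P x0 w T v :=
    le_ciInf hGle
  -- SM ≤ G
  have hsumc := sum_c (T := T) P F Hmat hPsT hPisT hPi1 hPi2 w
  have hx0b := x0_sq P F hP hPsT hPisT hPi1 hPi2 x0 (rv T F P w 0)
  -- trajectory of u equals x
  have hxs : ∀ t, seqState A B x0 u w t = x t := by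
    intro t
    induction t with
    | zero => simpa [seqState] using hx0.symm
    | succ t ih =>
        show A *ᵥ seqState A B x0 u w t + B *ᵥ u t + w t = x (t + 1)
        rw [ih, hx t]
  -- the gap vector
  have hdv : ∀ t, rv T F P w t
      - (∑ i ∈ Finset.range (min k (T - t)), ((Fᵀ) ^ i * P) *ᵥ w (t + i))
      = ((Fᵀ) ^ k) *ᵥ rv T F P w (t + k) := fun t => dv_eq T k F P w t
  have hgu : ∀ t, u t + ((R + Bᵀ * P * B)⁻¹ * Bᵀ) *ᵥ (P *ᵥ (A *ᵥ x t) + rv T F P w t)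
      = ((R + Bᵀ * P * B)⁻¹ * Bᵀ) *ᵥ (((Fᵀ) ^ k) *ᵥ rv T F P w (t + k)) := by
    intro t
    rw [hu t, neg_add_eq_sub, ← Matrix.mulVec_sub, add_sub_add_left_eq_sub, hdv t]
  have hALG : trajCost A B Q R P x0 w T u
      = (x0 ⬝ᵥ (P *ᵥ x0) + 2 * (rv T F P w 0 ⬝ᵥ (F *ᵥ x0)))
        + (∑ t ∈ Finset.range T,
            (w t ⬝ᵥ (P *ᵥ w t) + 2 * (rv T F P w (t + 1) ⬝ᵥ (F *ᵥ w t))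
              - rv T F P w t ⬝ᵥ (Hmat *ᵥ rv T F P w t)))
        + ∑ t ∈ Finset.range T,
            ((((Fᵀ) ^ k) *ᵥ rv T F P w (t + k))
              ⬝ᵥ (Hmat *ᵥ (((Fᵀ) ^ k) *ᵥ rv T F P w (t + k)))) := by
    rw [hcost u]
    congr 1
    refine Finset.sum_congr rfl fun t _ => ?_
    rw [hxs t, hgu t]
    exact (quadH P B R _ hNsT hN1 _).trans (by rw [← hHmat])
  -- per-term bound
  have hgqb : ∀ t,
      ((((Fᵀ) ^ k) *ᵥ rv T F P w (t + k))
        ⬝ᵥ (Hmat *ᵥ (((Fᵀ) ^ k) *ᵥ rv T F P w (t + k))))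
      ≤ (specNorm (F ^ k) ^ 2 * specNorm Hmat) * evNorm (rv T F P w (t + k)) ^ 2 := by
    intro t
    have h1 := dot_mulVec_le_specNorm Hmat (((Fᵀ) ^ k) *ᵥ rv T F P w (t + k))
    have h2 : evNorm (((Fᵀ) ^ k) *ᵥ rv T F P w (t + k))
        ≤ specNorm (F ^ k) * evNorm (rv T F P w (t + k)) := by
      calc evNorm (((Fᵀ) ^ k) *ᵥ rv T F P w (t + k))
          ≤ specNorm ((Fᵀ) ^ k) * evNorm (rv T F P w (t + k)) :=
            evNorm_mulVec_le ((Fᵀ) ^ k) (rv T F P w (t + k))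
        _ = specNorm (F ^ k) * evNorm (rv T F P w (t + k)) := by
            rw [show (Fᵀ) ^ k = (F ^ k)ᵀ from (Matrix.transpose_pow F k).symm,
              specNorm_transpose]
    have h3 : evNorm (((Fᵀ) ^ k) *ᵥ rv T F P w (t + k)) ^ 2
        ≤ specNorm (F ^ k) ^ 2 * evNorm (rv T F P w (t + k)) ^ 2 := by
      have := pow_le_pow_left₀ (evNorm_nonneg _) h2 2
      rwa [mul_pow] at this
    calc ((((Fᵀ) ^ k) *ᵥ rv T F P w (t + k))
          ⬝ᵥ (Hmat *ᵥ (((Fᵀ) ^ k) *ᵥ rv T F P w (t + k))))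
        ≤ specNorm Hmat * evNorm (((Fᵀ) ^ k) *ᵥ rv T F P w (t + k)) ^ 2 := h1
      _ ≤ specNorm Hmat * (specNorm (F ^ k) ^ 2 * evNorm (rv T F P w (t + k)) ^ 2) :=
          mul_le_mul_of_nonneg_left h3 (specNorm_nonneg _)
      _ = (specNorm (F ^ k) ^ 2 * specNorm Hmat) * evNorm (rv T F P w (t + k)) ^ 2 := by
          ring
  -- shift bound on the sum of squared norms
  have hshift : ∑ t ∈ Finset.range T, evNorm (rv T F P w (t + k)) ^ 2
      ≤ ∑ t ∈ Finset.range T, evNorm (rv T F P w t) ^ 2 := by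
    have h1 : ∑ t ∈ Finset.range T, evNorm (rv T F P w (t + k)) ^ 2
        = ∑ s ∈ Finset.Ico k (T + k), evNorm (rv T F P w s) ^ 2 := by
      rw [Finset.sum_Ico_eq_sum_range, show T + k - k = T from by omega]
      exact Finset.sum_congr rfl fun i _ => by rw [add_comm]
    have h2 : ∑ s ∈ Finset.Ico k (T + k), evNorm (rv T F P w s) ^ 2
        ≤ ∑ s ∈ Finset.range (T + k), evNorm (rv T F P w s) ^ 2 := by
      rw [Finset.range_eq_Ico]
      exact Finset.sum_le_sum_of_subset_of_nonneg
        (Finset.Ico_subset_Ico (Nat.zero_le k) le_rfl)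
        (fun s _ _ => sq_nonneg _)
    have h3 : ∑ s ∈ Finset.range (T + k), evNorm (rv T F P w s) ^ 2
        = ∑ s ∈ Finset.range T, evNorm (rv T F P w s) ^ 2
          + ∑ s ∈ Finset.Ico T (T + k), evNorm (rv T F P w s) ^ 2 := by
      rw [Finset.range_eq_Ico,
        ← Finset.sum_Ico_consecutive _ (Nat.zero_le T) (Nat.le_add_right T k),
        ← Finset.range_eq_Ico]
    have h4 : ∑ s ∈ Finset.Ico T (T + k), evNorm (rv T F P w s) ^ 2 = 0 := by
      refine Finset.sum_eq_zero fun s hs => ?_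
      rw [rv_ge T F P w (Finset.mem_Ico.1 hs).1, evNorm_zero]
      norm_num
    linarith
  have hK : 0 ≤ specNorm (F ^ k) ^ 2 * specNorm Hmat :=
    mul_nonneg (sq_nonneg _) (specNorm_nonneg _)
  have hD : ∑ t ∈ Finset.range T,
        ((((Fᵀ) ^ k) *ᵥ rv T F P w (t + k))
          ⬝ᵥ (Hmat *ᵥ (((Fᵀ) ^ k) *ᵥ rv T F P w (t + k))))
      ≤ (specNorm (F ^ k) ^ 2 * specNorm Hmat)
        * ∑ t ∈ Finset.range T, evNorm (rv T F P w t) ^ 2 := by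
    calc ∑ t ∈ Finset.range T,
          ((((Fᵀ) ^ k) *ᵥ rv T F P w (t + k))
            ⬝ᵥ (Hmat *ᵥ (((Fᵀ) ^ k) *ᵥ rv T F P w (t + k))))
        ≤ ∑ t ∈ Finset.range T,
            (specNorm (F ^ k) ^ 2 * specNorm Hmat) * evNorm (rv T F P w (t + k)) ^ 2 :=
          Finset.sum_le_sum fun t _ => hgqb t
      _ = (specNorm (F ^ k) ^ 2 * specNorm Hmat)
            * ∑ t ∈ Finset.range T, evNorm (rv T F P w (t + k)) ^ 2 := by
          rw [Finset.mul_sum]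
      _ ≤ _ := mul_le_mul_of_nonneg_left hshift hK
  -- D is nonnegative
  have hD0 : 0 ≤ ∑ t ∈ Finset.range T,
      ((((Fᵀ) ^ k) *ᵥ rv T F P w (t + k))
        ⬝ᵥ (Hmat *ᵥ (((Fᵀ) ^ k) *ᵥ rv T F P w (t + k)))) := by
    have := hGle u
    linarith [hALG]
  -- SM ≤ G
  have hSMG : ∑ t ∈ Finset.range T,
        rv T F P w t ⬝ᵥ ((P⁻¹ - F * P⁻¹ * Fᵀ - Hmat) *ᵥ rv T F P w t)
      ≤ (x0 ⬝ᵥ (P *ᵥ x0) + 2 * (rv T F P w 0 ⬝ᵥ (F *ᵥ x0)))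
        + (∑ t ∈ Finset.range T,
            (w t ⬝ᵥ (P *ᵥ w t) + 2 * (rv T F P w (t + 1) ⬝ᵥ (F *ᵥ w t))
              - rv T F P w t ⬝ᵥ (Hmat *ᵥ rv T F P w t))) := by
    linarith [hsumc, hx0b]
  rcases Nat.eq_zero_or_pos n with hn | hn
  · -- degenerate case n = 0
    subst hn
    have hlam0 : lambdaMin (P⁻¹ - F * P⁻¹ * Fᵀ - Hmat) = 0 := by
      unfold lambdaMin
      have hempty : {c : ℝ | ∃ y : Fin 0 → ℝ, evNorm y = 1
          ∧ c = y ⬝ᵥ ((P⁻¹ - F * P⁻¹ * Fᵀ - Hmat) *ᵥ y)} = ∅ := by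
        ext c
        simp only [Set.mem_setOf_eq, Set.mem_empty_iff_false, iff_false, not_exists]
        rintro y ⟨hy, -⟩
        have h0 : evNorm y = 0 := by simp [evNorm]
        rw [h0] at hy
        norm_num at hy
      rw [hempty, Real.sInf_empty]
    rw [hlam0, div_zero, add_zero, one_mul]
    have hSr0 : ∑ t ∈ Finset.range T, evNorm (rv T F P w t) ^ 2 = 0 := by
      refine Finset.sum_eq_zero fun t _ => ?_
      have : evNorm (rv T F P w t) = 0 := by simp [evNorm]
      rw [this]; norm_num
    rw [hSr0, mul_zero] at hD
    linarith [hALG, hD, hD0, hGOPT]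
  · -- main case
    have hlam : 0 < lambdaMin (P⁻¹ - F * P⁻¹ * Fᵀ - Hmat) := lambdaMin_pos hn hPD
    have hlamSr : lambdaMin (P⁻¹ - F * P⁻¹ * Fᵀ - Hmat)
          * ∑ t ∈ Finset.range T, evNorm (rv T F P w t) ^ 2
        ≤ ∑ t ∈ Finset.range T,
            rv T F P w t ⬝ᵥ ((P⁻¹ - F * P⁻¹ * Fᵀ - Hmat) *ᵥ rv T F P w t) := by
      rw [Finset.mul_sum]
      exact Finset.sum_le_sum fun t _ => lambdaMin_le_quad hPD _
    set lam := lambdaMin (P⁻¹ - F * P⁻¹ * Fᵀ - Hmat) with hlamdef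
    set Kc := specNorm (F ^ k) ^ 2 * specNorm Hmat with hKc
    set OPT := ⨅ v : ℕ → Fin m → ℝ, trajCost A B Q R P x0 w T v with hOPTdef
    have hc0 : 0 ≤ Kc / lam := div_nonneg hK hlam.le
    have hcK : Kc / lam * lam = Kc := div_mul_cancel₀ Kc hlam.ne'
    have hchain : Kc * ∑ t ∈ Finset.range T, evNorm (rv T F P w t) ^ 2
        ≤ (Kc / lam) * OPT := by
      have e1 : Kc * ∑ t ∈ Finset.range T, evNorm (rv T F P w t) ^ 2
          = (Kc / lam) * (lam * ∑ t ∈ Finset.range T, evNorm (rv T F P w t) ^ 2) := by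
        rw [← mul_assoc, hcK]
      rw [e1]
      calc (Kc / lam) * (lam * ∑ t ∈ Finset.range T, evNorm (rv T F P w t) ^ 2)
          ≤ (Kc / lam) * ∑ t ∈ Finset.range T,
              rv T F P w t ⬝ᵥ ((P⁻¹ - F * P⁻¹ * Fᵀ - Hmat) *ᵥ rv T F P w t) :=
            mul_le_mul_of_nonneg_left hlamSr hc0
        _ ≤ (Kc / lam) * OPT :=
            mul_le_mul_of_nonneg_left (le_trans hSMG hGOPT) hc0
    have hfinal : trajCost A B Q R P x0 w T u ≤ OPT + (Kc / lam) * OPT := by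
      linarith [hALG, hD, hchain, hGOPT]
    calc trajCost A B Q R P x0 w T u ≤ OPT + (Kc / lam) * OPT := hfinal
      _ = (1 + Kc / lam) * OPT := by ring
end

section
/- Let 0 < f < 1 and let (ε_i)_{i≥0} be a nondecreasing sequence of nonnegative reals. Define g : ℕ → ℝ by g(k) = (1 + f) Σ_{i=0}^{k−1} ε_i f^i + f^k. Then for every k ∈ ℕ, g(k+1) < g(k) if and only if ε_k < (1 − f)/(1 + f). Consequently, if k ≥ 1 satisfies ε_{k−1} < (1 − f)/(1 + f) < ε_k, then g attains its minimum over ℕ uniquely at k. -/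
open Matrix

theorem stmt18 (f : ℝ) (hf0 : 0 < f) (hf1 : f < 1)
    (ε : ℕ → ℝ) (hε0 : ∀ i, 0 ≤ ε i) (hmono : Monotone ε) :
    (∀ k : ℕ,
      ((1 + f) * ∑ i ∈ Finset.range (k + 1), ε i * f ^ i + f ^ (k + 1) <
          (1 + f) * ∑ i ∈ Finset.range k, ε i * f ^ i + f ^ k) ↔
        ε k < (1 - f) / (1 + f)) ∧
    ∀ k : ℕ, 1 ≤ k → ε (k - 1) < (1 - f) / (1 + f) → (1 - f) / (1 + f) < ε k →
      ∀ j : ℕ, j ≠ k →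
        (1 + f) * ∑ i ∈ Finset.range k, ε i * f ^ i + f ^ k <
          (1 + f) * ∑ i ∈ Finset.range j, ε i * f ^ i + f ^ j := by
  have hf1p : (0:ℝ) < 1 + f := by linarith
  set g : ℕ → ℝ := fun k => (1 + f) * ∑ i ∈ Finset.range k, ε i * f ^ i + f ^ k with hg
  have hfk : ∀ k : ℕ, (0:ℝ) < f ^ k := fun k => pow_pos hf0 k
  have hdiff : ∀ k, g (k+1) - g k = f ^ k * ((1 + f) * ε k - (1 - f)) := by
    intro k
    simp only [hg, Finset.sum_range_succ]
    ring
  have hstep : ∀ k, (g (k+1) < g k ↔ ε k < (1 - f) / (1 + f)) := by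
    intro k
    rw [← sub_neg, hdiff, lt_div_iff₀ hf1p]
    constructor
    · intro h
      nlinarith [hfk k]
    · intro h
      have : (1 + f) * ε k - (1 - f) < 0 := by nlinarith
      exact mul_neg_of_pos_of_neg (hfk k) this
  refine ⟨hstep, ?_⟩
  intro k hk1 hlo hhi j hj
  have hdec : ∀ i, i < k → g (i+1) < g i := by
    intro i hi
    exact (hstep i).2 (lt_of_le_of_lt (hmono (by omega : i ≤ k - 1)) hlo)
  have hinc : ∀ i, k ≤ i → g i < g (i+1) := by
    intro i hi
    have h1 : (1 - f) / (1 + f) < ε i := lt_of_lt_of_le hhi (hmono hi)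
    have h2 : 0 < (1 + f) * ε i - (1 - f) := by
      rw [div_lt_iff₀ hf1p] at h1; nlinarith
    nlinarith [hdiff i, hfk i]
  rcases lt_or_gt_of_ne hj with h | h
  · have key : ∀ m, j + m ≤ k → 0 < m → g (j + m) < g j := by
      intro m
      induction m with
      | zero => omega
      | succ m ih =>
        intro h1 _
        rcases Nat.eq_zero_or_pos m with hm | hm
        · subst hm
          simpa using hdec j (by omega)
        · calc g (j + (m+1)) = g ((j+m)+1) := rfl
            _ < g (j+m) := hdec (j+m) (by omega)
            _ < g j := ih (by omega) hm
    have := key (k - j) (by omega) (by omega)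
    simpa [Nat.add_sub_cancel' (le_of_lt h)] using this
  · have key : ∀ m, 0 < m → g k < g (k + m) := by
      intro m
      induction m with
      | zero => omega
      | succ m ih =>
        intro _
        rcases Nat.eq_zero_or_pos m with hm | hm
        · subst hm; simpa using hinc k le_rfl
        · calc g k < g (k+m) := ih hm
            _ < g ((k+m)+1) := hinc (k+m) (by omega)
            _ = g (k+(m+1)) := rfl
    have := key (j - k) (by omega)
    simpa [Nat.add_sub_cancel' (le_of_lt h)] using this
end

section
/- Let d > k ≥ 0 and t ≥ d with t ≤ T. Suppose the controller, given predictions ŵ_{s|t} ∈ ℝ^n for s = t−d,…,t−d+k−1, forms the estimate x̂ by x̂_{t−d} = x_{t−d}, x̂_{s+1} = A x̂_s + B u_s + ŵ_{s|t} for s = t−d,…,t−d+k−1, and x̂_{s+1} = A x̂_s + B u_s for s = t−d+k,…,t−1 (where x and u are the actual states and controls of the system), and applies u_t = −(R + BᵀPB)⁻¹ Bᵀ P A x̂_t. Then u_t = −(R + BᵀPB)⁻¹ Bᵀ (P A x_t + Σ_{i=0}^{T−t−1} (Fᵀ)^i P w_{t+i} − η_t) with η_t = Σ_{i=0}^{k−1}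 P A^{d−i} e_{t−d+i|t} + Σ_{i=k}^{d−1} P A^{d−i} w_{t−d+i} + Σ_{i=0}^{T−t−1} (Fᵀ)^i P w_{t+i}, where e_{s|t} = w_s − ŵ_{s|t}. -/
open Matrix

private lemma mulVec_sum' {n p : ℕ} (A : Matrix (Fin n) (Fin p) ℝ)
    (s : Finset ℕ) (f : ℕ → Fin p → ℝ) :
    A *ᵥ (∑ i ∈ s, f i) = ∑ i ∈ s, A *ᵥ f i := by
  induction s using Finset.induction with
  | empty => simp
  | insert _ _ h ih => rw [Finset.sum_insert h, Finset.sum_insert h, Matrix.mulVec_add, ih]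

theorem stmt19 (n m T d k t : ℕ) (hkd : k < d) (htd : d ≤ t) (htT : t ≤ T)
    (A : Matrix (Fin n) (Fin n) ℝ) (B : Matrix (Fin n) (Fin m) ℝ)
    (Q : Matrix (Fin n) (Fin n) ℝ) (R : Matrix (Fin m) (Fin m) ℝ)
    (P : Matrix (Fin n) (Fin n) ℝ)
    (hQ : Q.PosSemidef) (hR : R.PosDef) (hP : P.PosDef)
    (hDARE : P = Q + Aᵀ * P * A - Aᵀ * P * B * (R + Bᵀ * P * B)⁻¹ * (Bᵀ * P * A))
    (F : Matrix (Fin n) (Fin n) ℝ)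
    (hF : F = A - B * ((R + Bᵀ * P * B)⁻¹ * (Bᵀ * P * A)))
    (x : ℕ → Fin n → ℝ) (u : ℕ → Fin m → ℝ) (w what : ℕ → Fin n → ℝ)
    (xhat : ℕ → Fin n → ℝ)
    (hx : ∀ s, x (s + 1) = A *ᵥ x s + B *ᵥ u s + w s)
    (hinit : xhat (t - d) = x (t - d))
    (hhat1 : ∀ s, t - d ≤ s → s < t - d + k →
      xhat (s + 1) = A *ᵥ xhat s + B *ᵥ u s + what s)
    (hhat2 : ∀ s, t - d + k ≤ s → s < t → xhat (s + 1) = A *ᵥ xhat s + B *ᵥ u s)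
    (hu : u t = -((((R + Bᵀ * P * B)⁻¹ * (Bᵀ * P * A)) *ᵥ xhat t))) :
    u t = -((((R + Bᵀ * P * B)⁻¹ * Bᵀ) *ᵥ
      (P *ᵥ (A *ᵥ x t) + (∑ i ∈ Finset.range (T - t), ((Fᵀ) ^ i * P) *ᵥ w (t + i))
        - ((∑ i ∈ Finset.range k, (P * A ^ (d - i)) *ᵥ (w (t - d + i) - what (t - d + i)))
          + (∑ i ∈ Finset.Ico k d, (P * A ^ (d - i)) *ᵥ w (t - d + i))
          + ∑ i ∈ Finset.range (T - t), ((Fᵀ) ^ i * P) *ᵥ w (t + i))))) := by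

  -- error propagation, stage 1: steps 0..k
  have key1 : ∀ j, j ≤ k → x (t - d + j) - xhat (t - d + j)
      = ∑ i ∈ Finset.range j, (A ^ (j - 1 - i)) *ᵥ (w (t - d + i) - what (t - d + i)) := by
    intro j
    induction j with
    | zero => intro _; simp [hinit]
    | succ j ih =>
      intro hjk
      have hjk' : j < k := hjk
      have step : x (t - d + (j + 1)) - xhat (t - d + (j + 1))
          = A *ᵥ (x (t - d + j) - xhat (t - d + j)) + (w (t - d + j) - what (t - d + j)) := by
        rw [show t - d + (j + 1) = (t - d + j) + 1 by omega, hx (t - d + j),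
          hhat1 (t - d + j) (Nat.le_add_right _ _) (by omega), Matrix.mulVec_sub]
        abel
      rw [step, ih (le_of_lt hjk'), Finset.sum_range_succ, mulVec_sum']
      congr 1
      · apply Finset.sum_congr rfl
        intro i hi
        simp only [Finset.mem_range] at hi
        rw [show j + 1 - 1 - i = j - 1 - i + 1 by omega, pow_succ', Matrix.mulVec_mulVec]
      · rw [show j + 1 - 1 - j = 0 by omega, pow_zero, Matrix.one_mulVec]
  -- stage 2: steps k..d
  have key2 : ∀ j, k ≤ j → j ≤ d → x (t - d + j) - xhat (t - d + j)
      = (∑ i ∈ Finset.range k, (A ^ (j - 1 - i)) *ᵥ (w (t - d + i) - what (t - d + i)))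
        + ∑ i ∈ Finset.Ico k j, (A ^ (j - 1 - i)) *ᵥ w (t - d + i) := by
    intro j hkj
    induction j, hkj using Nat.le_induction with
    | base => intro _; simp [key1 k le_rfl]
    | succ j hkj ih =>
      intro hjd
      have hjd' : j < d := hjd
      have step : x (t - d + (j + 1)) - xhat (t - d + (j + 1))
          = A *ᵥ (x (t - d + j) - xhat (t - d + j)) + w (t - d + j) := by
        rw [show t - d + (j + 1) = (t - d + j) + 1 by omega, hx (t - d + j),
          hhat2 (t - d + j) (by omega) (by omega), Matrix.mulVec_sub]
        abel
      rw [step, ih (le_of_lt hjd'), Matrix.mulVec_add, mulVec_sum', mulVec_sum',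
        Finset.sum_Ico_succ_top hkj, show j + 1 - 1 - j = 0 by omega, pow_zero,
        Matrix.one_mulVec]
      have h1 : ∀ i ∈ Finset.range k, A *ᵥ ((A ^ (j - 1 - i)) *ᵥ (w (t - d + i) - what (t - d + i)))
          = (A ^ (j + 1 - 1 - i)) *ᵥ (w (t - d + i) - what (t - d + i)) := by
        intro i hi
        simp only [Finset.mem_range] at hi
        rw [show j + 1 - 1 - i = j - 1 - i + 1 by omega, pow_succ', Matrix.mulVec_mulVec]
      have h2 : ∀ i ∈ Finset.Ico k j, A *ᵥ ((A ^ (j - 1 - i)) *ᵥ w (t - d + i))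
          = (A ^ (j + 1 - 1 - i)) *ᵥ w (t - d + i) := by
        intro i hi
        simp only [Finset.mem_Ico] at hi
        rw [show j + 1 - 1 - i = j - 1 - i + 1 by omega, pow_succ', Matrix.mulVec_mulVec]
      rw [Finset.sum_congr rfl h1, Finset.sum_congr rfl h2]
      abel
  have hdiff := key2 d (le_of_lt hkd) le_rfl
  rw [show t - d + d = t by omega] at hdiff
  set M := (R + Bᵀ * P * B)⁻¹
  set E1 := ∑ i ∈ Finset.range k, (P * A ^ (d - i)) *ᵥ (w (t - d + i) - what (t - d + i)) with hE1
  set E2 := ∑ i ∈ Finset.Ico k d, (P * A ^ (d - i)) *ᵥ w (t - d + i) with hE2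
  set S := ∑ i ∈ Finset.range (T - t), ((Fᵀ) ^ i * P) *ᵥ w (t + i) with hS
  have harg : P *ᵥ (A *ᵥ x t) + S - (E1 + E2 + S) = P *ᵥ (A *ᵥ x t) - E1 - E2 := by abel
  rw [harg]
  have hxt : x t = xhat t + (x t - xhat t) := by abel
  have hPA : P *ᵥ (A *ᵥ x t) = P *ᵥ (A *ᵥ xhat t) + E1 + E2 := by
    rw [hxt, hdiff]
    rw [Matrix.mulVec_add, Matrix.mulVec_add, Matrix.mulVec_add, Matrix.mulVec_add,
      mulVec_sum', mulVec_sum', mulVec_sum', mulVec_sum']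
    have h1 : ∀ i ∈ Finset.range k,
        P *ᵥ (A *ᵥ ((A ^ (d - 1 - i)) *ᵥ (w (t - d + i) - what (t - d + i))))
        = (P * A ^ (d - i)) *ᵥ (w (t - d + i) - what (t - d + i)) := by
      intro i hi
      simp only [Finset.mem_range] at hi
      rw [Matrix.mulVec_mulVec, Matrix.mulVec_mulVec, mul_assoc, ← pow_succ',
        show d - 1 - i + 1 = d - i by omega]
    have h2 : ∀ i ∈ Finset.Ico k d,
        P *ᵥ (A *ᵥ ((A ^ (d - 1 - i)) *ᵥ w (t - d + i)))
        = (P * A ^ (d - i)) *ᵥ w (t - d + i) := by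
      intro i hi
      simp only [Finset.mem_Ico] at hi
      rw [Matrix.mulVec_mulVec, Matrix.mulVec_mulVec, mul_assoc, ← pow_succ',
        show d - 1 - i + 1 = d - i by omega]
    rw [Finset.sum_congr rfl h1, Finset.sum_congr rfl h2, hE1, hE2]
    abel
  rw [hPA, show P *ᵥ (A *ᵥ xhat t) + E1 + E2 - E1 - E2 = P *ᵥ (A *ᵥ xhat t) by abel,
    Matrix.mulVec_mulVec, Matrix.mulVec_mulVec, hu]
  simp only [Matrix.mul_assoc]
end
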